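/- Let ℓ be an odd prime. The set of indices [GL₂(ℤ/ℓℤ) : G] over subgroups G of GL₂(ℤ/ℓℤ) that belong to the normalizer N_ns(ℓ) of the nonsplit Cartan equals the set of positive integers divisible by ℓ(ℓ−1)/2 and dividing ℓ(ℓ+1)(ℓ−1)²/2. -/

import Mathlib

open Matrix

abbrev GL2 (ℓ : ℕ) : Type := GL (Fin 2) (ZMod ℓ)

namespace Paper

/-- The underlying matrix of an element of `GL₂(ℤ/ℓℤ)`. -/
def mat {ℓ : ℕ} (g : GL2 ℓ) : Matrix (Fin 2) (Fin 2) (ZMod ℓ) := ↑g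

/-- The set of scalar matrices `Z(ℓ)`. -/
def ZSet (ℓ : ℕ) : Set (GL2 ℓ) :=
  { g | ∃ x : ZMod ℓ, mat g = x • (1 : Matrix (Fin 2) (Fin 2) (ZMod ℓ)) }

/-- The split Cartan `C_s(ℓ)`: invertible diagonal matrices. -/
def CsSet (ℓ : ℕ) : Set (GL2 ℓ) := { g | mat g 0 1 = 0 ∧ mat g 1 0 = 0 }

/-- The normalizer `N_s(ℓ)` of the split Cartan: diagonal and antidiagonal matrices. -/
def NsSet (ℓ : ℕ) : Set (GL2 ℓ) :=
  CsSet ℓ ∪ { g | mat g 0 0 = 0 ∧ mat g 1 1 = 0 }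

/-- The nonsplit Cartan `C_ns(ℓ)` relative to the nonsquare `ε`. -/
def CnsSet (ℓ : ℕ) (ε : ZMod ℓ) : Set (GL2 ℓ) :=
  { g | ∃ x y : ZMod ℓ, mat g = !![x, ε * y; y, x] }

/-- The normalizer `N_ns(ℓ)` of the nonsplit Cartan. -/
def NnsSet (ℓ : ℕ) (ε : ZMod ℓ) : Set (GL2 ℓ) :=
  CnsSet ℓ ε ∪ { g | ∃ x y : ZMod ℓ, mat g = !![x, -(ε * y); y, -x] }

/-- The ramified Cartan `C_r(ℓ)`. -/
def CrSet (ℓ : ℕ) : Set (GL2 ℓ) :=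
  { g | mat g 1 0 = 0 ∧ mat g 0 0 = mat g 1 1 }

/-- The Borel subgroup `B(ℓ)`: upper triangular matrices. -/
def BorelSet (ℓ : ℕ) : Set (GL2 ℓ) := { g | mat g 1 0 = 0 }

/-- `G` is conjugate in `GL₂(ℤ/ℓℤ)` to a subgroup of the set `M`. -/
def ConjSub {ℓ : ℕ} (G : Subgroup (GL2 ℓ)) (M : Set (GL2 ℓ)) : Prop :=
  ∃ a : GL2 ℓ, ∀ g ∈ G, a * g * a⁻¹ ∈ M

/-- `G` belongs to `Z(ℓ)`. -/
def BelongsZ {ℓ : ℕ} (G : Subgroup (GL2 ℓ)) : Prop := ConjSub G (ZSet ℓ)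

/-- `G` belongs to `C_s(ℓ)`. -/
def BelongsCs {ℓ : ℕ} (G : Subgroup (GL2 ℓ)) : Prop :=
  ConjSub G (CsSet ℓ) ∧ ¬ ConjSub G (ZSet ℓ)

/-- `G` belongs to `C_ns(ℓ)`. -/
def BelongsCns {ℓ : ℕ} (ε : ZMod ℓ) (G : Subgroup (GL2 ℓ)) : Prop :=
  ConjSub G (CnsSet ℓ ε) ∧ ¬ ConjSub G (ZSet ℓ)

/-- `G` belongs to `N_s(ℓ)`. -/
def BelongsNs {ℓ : ℕ} (G : Subgroup (GL2 ℓ)) : Prop :=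
  ConjSub G (NsSet ℓ) ∧ ¬ ConjSub G (CsSet ℓ)

/-- `G` belongs to `N_ns(ℓ)`. -/
def BelongsNns {ℓ : ℕ} (ε : ZMod ℓ) (G : Subgroup (GL2 ℓ)) : Prop :=
  ConjSub G (NnsSet ℓ ε) ∧ ¬ ConjSub G (CnsSet ℓ ε)

/-- `G` belongs to the ramified Cartan `C_r(ℓ)`. -/
def BelongsCr {ℓ : ℕ} (G : Subgroup (GL2 ℓ)) : Prop :=
  ConjSub G (CrSet ℓ) ∧ ¬ ConjSub G (ZSet ℓ)

/-- `H` is a twist of `G`: either `H = ⟨G, -I⟩`, or `H` is an index-2 subgroup of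
`⟨G, -I⟩` not containing `-I`. -/
def TwistOf {ℓ : ℕ} (G H : Subgroup (GL2 ℓ)) : Prop :=
  H = G ⊔ Subgroup.closure {(-1 : GL2 ℓ)} ∨
    (H ≤ G ⊔ Subgroup.closure {(-1 : GL2 ℓ)} ∧
      H.relIndex (G ⊔ Subgroup.closure {(-1 : GL2 ℓ)}) = 2 ∧
      (-1 : GL2 ℓ) ∉ H)

/-- `H` fixes a nonzero vector of `(ℤ/ℓℤ)²`. -/
def FixesVec {ℓ : ℕ} (H : Subgroup (GL2 ℓ)) : Prop :=
  ∃ v : Fin 2 → ZMod ℓ, v ≠ 0 ∧ ∀ h ∈ H, Matrix.mulVec (mat h) v = v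

end Paper

namespace NnsProof
variable {ℓ : ℕ} {ε : ZMod ℓ}

def Kmat (ε x y : ZMod ℓ) : Matrix (Fin 2) (Fin 2) (ZMod ℓ) := !![x, ε*y; y, x]

lemma Kmat_mul (ε x y a b : ZMod ℓ) :
    Kmat ε x y * Kmat ε a b = Kmat ε (x*a+ε*(y*b)) (x*b+y*a) := by
  unfold Kmat
  rw [Matrix.mul_fin_two]
  congr 1 <;> ring

def S (ε : ZMod ℓ) : Subring (Matrix (Fin 2) (Fin 2) (ZMod ℓ)) where
  carrier := {A | ∃ x y, A = Kmat ε x y}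
  zero_mem' := ⟨0, 0, by ext i j; fin_cases i <;> fin_cases j <;> simp [Kmat]⟩
  one_mem' := ⟨1, 0, by ext i j; fin_cases i <;> fin_cases j <;> simp [Kmat]⟩
  add_mem' := by
    rintro _ _ ⟨x, y, rfl⟩ ⟨a, b, rfl⟩
    refine ⟨x+a, y+b, ?_⟩
    ext i j; fin_cases i <;> fin_cases j <;> simp [Kmat] <;> ring
  neg_mem' := by
    rintro _ ⟨x, y, rfl⟩
    exact ⟨-x, -y, by ext i j; fin_cases i <;> fin_cases j <;> simp [Kmat]⟩
  mul_mem' := by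
    rintro _ _ ⟨x, y, rfl⟩ ⟨a, b, rfl⟩
    exact ⟨_, _, Kmat_mul ε x y a b⟩

lemma S_mul_comm (u v : S ε) : u * v = v * u := by
  obtain ⟨x, y, hu⟩ := u.2
  obtain ⟨a, b, hv⟩ := v.2
  apply Subtype.ext
  simp only [MulMemClass.coe_mul]
  rw [hu, hv, Kmat_mul, Kmat_mul]
  congr 1 <;> ring

lemma Kmat_det (ε x y : ZMod ℓ) : (Kmat ε x y).det = x^2 - ε * y^2 := by
  simp [Kmat, Matrix.det_fin_two_of]; ring

lemma Kmat_det_ne (hℓ : Nat.Prime ℓ) (hε : ∀ t : ZMod ℓ, t ^ 2 ≠ ε)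
    {x y : ZMod ℓ} (h : ¬(x = 0 ∧ y = 0)) : x^2 - ε * y^2 ≠ 0 := by
  haveI := Fact.mk hℓ
  intro hd
  rcases eq_or_ne y 0 with hy | hy
  · subst hy
    have hx : x = 0 := by
      have : x^2 = 0 := by linear_combination hd
      exact pow_eq_zero_iff (by norm_num) |>.mp this
    exact h ⟨hx, rfl⟩
  · apply hε (x / y)
    field_simp
    linear_combination hd

lemma S_isField (hℓ : Nat.Prime ℓ) (hε : ∀ t : ZMod ℓ, t ^ 2 ≠ ε) : IsField (S ε) := by
  haveI := Fact.mk hℓ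
  refine ⟨?_, fun {u v} => S_mul_comm u v, ?_⟩
  · refine ⟨0, 1, fun h => ?_⟩
    have := congrArg (fun (u : S ε) => (u : Matrix (Fin 2) (Fin 2) (ZMod ℓ)) 0 0) h
    simpa using this
  · rintro ⟨A, hA⟩ hne
    obtain ⟨x, y, rfl⟩ := hA
    have hxy : ¬(x = 0 ∧ y = 0) := by
      rintro ⟨rfl, rfl⟩
      apply hne
      apply Subtype.ext
      show Kmat ε 0 0 = 0
      ext i j; fin_cases i <;> fin_cases j <;> simp [Kmat]
    set d := x^2 - ε*y^2 with hd
    have hdne : d ≠ 0 := Kmat_det_ne hℓ hε hxy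
    refine ⟨⟨Kmat ε (d⁻¹*x) (d⁻¹*(-y)), _, _, rfl⟩, ?_⟩
    apply Subtype.ext
    show Kmat ε x y * Kmat ε (d⁻¹*x) (d⁻¹*(-y)) = 1
    rw [Kmat_mul]
    have h1 : x*(d⁻¹*x) + ε*(y*(d⁻¹*(-y))) = 1 := by
      field_simp
      ring
    have h2 : x*(d⁻¹*(-y)) + y*(d⁻¹*x) = 0 := by ring
    rw [h1, h2]
    ext i j; fin_cases i <;> fin_cases j <;> simp [Kmat]

def wm (ℓ : ℕ) : Matrix (Fin 2) (Fin 2) (ZMod ℓ) := !![1, 0; 0, -1]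
lemma wm_mul_wm : wm ℓ * wm ℓ = 1 := by
  rw [wm, Matrix.mul_fin_two]
  ext i j; fin_cases i <;> fin_cases j <;> simp
def Wu (ℓ : ℕ) : GL2 ℓ := ⟨wm ℓ, wm ℓ, wm_mul_wm, wm_mul_wm⟩
lemma Wu_mul_Wu : Wu ℓ * Wu ℓ = 1 := Units.ext wm_mul_wm
lemma Wu_inv : (Wu ℓ)⁻¹ = Wu ℓ := by rw [inv_eq_iff_mul_eq_one, Wu_mul_Wu]
lemma wm_conj_Kmat (ε x y : ZMod ℓ) : wm ℓ * Kmat ε x y * wm ℓ = Kmat ε x (-y) := by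
  rw [wm, Kmat, Matrix.mul_fin_two, Matrix.mul_fin_two]
  unfold Kmat
  ext i j; fin_cases i <;> fin_cases j <;> simp
def phi (ε : ZMod ℓ) : (S ε)ˣ →* GL2 ℓ := Units.map (S ε).subtype
lemma phi_val (u : (S ε)ˣ) : (phi ε u : Matrix (Fin 2) (Fin 2) (ZMod ℓ)) = ((u : S ε) : Matrix (Fin 2) (Fin 2) (ZMod ℓ)) := rfl

lemma phi_injective : Function.Injective (phi (ℓ := ℓ) ε) :=
  Units.map_injective (S ε).subtype_injective

lemma wconj_mul (a b : Matrix (Fin 2) (Fin 2) (ZMod ℓ)) :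
    (wm ℓ * a * wm ℓ) * (wm ℓ * b * wm ℓ) = wm ℓ * (a*b) * wm ℓ := by
  calc (wm ℓ * a * wm ℓ) * (wm ℓ * b * wm ℓ)
      = wm ℓ * a * (wm ℓ * wm ℓ) * (b * wm ℓ) := by simp only [mul_assoc]
    _ = wm ℓ * (a*b) * wm ℓ := by rw [wm_mul_wm]; simp only [mul_one, mul_assoc]

lemma wconj_pow (a : Matrix (Fin 2) (Fin 2) (ZMod ℓ)) (m : ℕ) :
    (wm ℓ * a * wm ℓ)^m = wm ℓ * a^m * wm ℓ := by
  induction m with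
  | zero => simp [wm_mul_wm]
  | succ k ih => rw [pow_succ, ih, wconj_mul, pow_succ]

lemma S_conj_mem (a : S ε) : wm ℓ * (a : Matrix (Fin 2) (Fin 2) (ZMod ℓ)) * wm ℓ ∈ S ε := by
  obtain ⟨x, y, h⟩ := a.2
  exact ⟨x, -y, by rw [h, wm_conj_Kmat]⟩

lemma conj_phi (u : (S ε)ˣ) : ∃ v : (S ε)ˣ,
    Wu ℓ * phi ε u * Wu ℓ = phi ε v ∧ ∀ m : ℕ, u ^ m = 1 → v ^ m = 1 := by
  have hab : ((u : S ε) : Matrix (Fin 2) (Fin 2) (ZMod ℓ)) * ((u⁻¹ : (S ε)ˣ) : S ε) = 1 := by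
    have h := congrArg (fun s : S ε => (s : Matrix (Fin 2) (Fin 2) (ZMod ℓ))) u.mul_inv
    simpa only [MulMemClass.coe_mul, OneMemClass.coe_one] using h
  have hba : (((u⁻¹ : (S ε)ˣ) : S ε) : Matrix (Fin 2) (Fin 2) (ZMod ℓ)) * (u : S ε) = 1 := by
    have h := congrArg (fun s : S ε => (s : Matrix (Fin 2) (Fin 2) (ZMod ℓ))) u.inv_mul
    simpa only [MulMemClass.coe_mul, OneMemClass.coe_one] using h
  refine ⟨⟨⟨wm ℓ * ((u : S ε) : Matrix (Fin 2) (Fin 2) (ZMod ℓ)) * wm ℓ, S_conj_mem _⟩,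
         ⟨wm ℓ * (((u⁻¹ : (S ε)ˣ) : S ε) : Matrix (Fin 2) (Fin 2) (ZMod ℓ)) * wm ℓ, S_conj_mem _⟩,
         ?_, ?_⟩, ?_, ?_⟩
  · apply Subtype.ext
    show (wm ℓ * _ * wm ℓ) * (wm ℓ * _ * wm ℓ) = 1
    rw [wconj_mul, hab, mul_one, wm_mul_wm]
  · apply Subtype.ext
    show (wm ℓ * _ * wm ℓ) * (wm ℓ * _ * wm ℓ) = 1
    rw [wconj_mul, hba, mul_one, wm_mul_wm]
  · apply Units.ext
    show wm ℓ * _ * wm ℓ = _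
    rfl
  · intro m hm
    apply Units.ext
    apply Subtype.ext
    show ((wm ℓ * _ * wm ℓ : Matrix (Fin 2) (Fin 2) (ZMod ℓ)))^m = 1
    rw [wconj_pow]
    have : (((u^m : (S ε)ˣ) : S ε) : Matrix (Fin 2) (Fin 2) (ZMod ℓ)) = 1 := by rw [hm]; rfl
    have h2 : ((u : S ε) : Matrix (Fin 2) (Fin 2) (ZMod ℓ))^m = 1 := by
      simpa using this
    rw [h2, mul_one, wm_mul_wm]

def glue (P : Subgroup (GL2 ℓ)) (hP : ∀ p ∈ P, Wu ℓ * p * Wu ℓ ∈ P) : Subgroup (GL2 ℓ) where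
  carrier := {g | g ∈ P ∨ Wu ℓ * g ∈ P}
  one_mem' := Or.inl P.one_mem
  mul_mem' := by
    rintro g h (hg | hg) (hh | hh)
    · exact Or.inl (P.mul_mem hg hh)
    · right
      have e : Wu ℓ * (g*h) = (Wu ℓ * g * Wu ℓ) * (Wu ℓ * h) := by
        rw [show (Wu ℓ*g*Wu ℓ)*(Wu ℓ*h) = Wu ℓ*g*(Wu ℓ*Wu ℓ)*h by group, Wu_mul_Wu]
        group
      rw [e]
      exact P.mul_mem (hP _ hg) hh
    · right
      have e : Wu ℓ * (g*h) = (Wu ℓ * g) * h := by group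
      rw [e]; exact P.mul_mem hg hh
    · left
      have e : g*h = (Wu ℓ * (Wu ℓ * g) * Wu ℓ) * (Wu ℓ * h) := by
        rw [show (Wu ℓ*(Wu ℓ*g)*Wu ℓ)*(Wu ℓ*h) = Wu ℓ*Wu ℓ*g*(Wu ℓ*Wu ℓ)*h by group, Wu_mul_Wu]
        group
      rw [e]
      exact P.mul_mem (hP _ hg) hh
  inv_mem' := by
    rintro g (hg | hg)
    · exact Or.inl (P.inv_mem hg)
    · right
      have e : Wu ℓ * g⁻¹ = Wu ℓ * (Wu ℓ * g)⁻¹ * Wu ℓ := by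
        rw [_root_.mul_inv_rev, show Wu ℓ*(g⁻¹*(Wu ℓ)⁻¹)*Wu ℓ = Wu ℓ*g⁻¹*((Wu ℓ)⁻¹*Wu ℓ) by group]
        group
      rw [e]
      exact hP _ (P.inv_mem hg)

lemma mem_glue_iff {P : Subgroup (GL2 ℓ)} {hP} {g : GL2 ℓ} :
    g ∈ glue P hP ↔ g ∈ P ∨ Wu ℓ * g ∈ P := Iff.rfl

lemma Wu_mem_glue {P : Subgroup (GL2 ℓ)} {hP} : Wu ℓ ∈ glue P hP :=
  Or.inr (by rw [Wu_mul_Wu]; exact P.one_mem)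


lemma mem_range_phi_of_Kmat (hℓ : Nat.Prime ℓ) (hε : ∀ t : ZMod ℓ, t ^ 2 ≠ ε)
    {g : GL2 ℓ} {x y : ZMod ℓ} (h : (g : Matrix (Fin 2) (Fin 2) (ZMod ℓ)) = Kmat ε x y) :
    g ∈ (phi ε).range := by
  haveI := Fact.mk hℓ
  letI : Field (S ε) := (S_isField hℓ hε).toField
  set s : S ε := ⟨(g : Matrix (Fin 2) (Fin 2) (ZMod ℓ)), x, y, h⟩ with hs
  have hsne : s ≠ 0 := by
    intro h0
    have h0' : (g : Matrix (Fin 2) (Fin 2) (ZMod ℓ)) = 0 := congrArg Subtype.val h0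
    have h1 : (g : Matrix (Fin 2) (Fin 2) (ZMod ℓ)) * ((g⁻¹ : GL2 ℓ) : Matrix (Fin 2) (Fin 2) (ZMod ℓ)) = 1 := by
      rw [← Units.val_mul, mul_inv_cancel, Units.val_one]
    rw [h0', zero_mul] at h1
    have := congrFun (congrFun h1 0) 0
    simp at this
  have hu : IsUnit s := hsne.isUnit
  refine ⟨hu.unit, Units.ext ?_⟩
  show ((hu.unit : S ε) : Matrix (Fin 2) (Fin 2) (ZMod ℓ)) = (g : Matrix (Fin 2) (Fin 2) (ZMod ℓ))
  rw [IsUnit.unit_spec]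

def NnsSub (ε : ZMod ℓ) : Subgroup (GL2 ℓ) :=
  glue (phi ε).range (by
    rintro p ⟨u, rfl⟩
    obtain ⟨v, hv, -⟩ := conj_phi u
    rw [hv]
    exact ⟨v, rfl⟩)

lemma range_phi_subset_Cns {g : GL2 ℓ} (h : g ∈ (phi ε).range) :
    ∃ x y : ZMod ℓ, (g : Matrix (Fin 2) (Fin 2) (ZMod ℓ)) = !![x, ε*y; y, x] := by
  obtain ⟨u, rfl⟩ := h
  obtain ⟨x, y, h⟩ := (u : S ε).2
  exact ⟨x, y, h⟩

lemma NnsSet_eq_NnsSub (hℓ : Nat.Prime ℓ) (hε : ∀ t : ZMod ℓ, t ^ 2 ≠ ε) :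
    Paper.NnsSet ℓ ε = (NnsSub ε : Set (GL2 ℓ)) := by
  ext g
  constructor
  · rintro (⟨x, y, h⟩ | ⟨x, y, h⟩)
    · exact Or.inl (mem_range_phi_of_Kmat hℓ hε h)
    · refine Or.inr (mem_range_phi_of_Kmat hℓ hε (x := x) (y := -y) ?_)
      show ((Wu ℓ : GL2 ℓ) : Matrix (Fin 2) (Fin 2) (ZMod ℓ)) * (g : Matrix (Fin 2) (Fin 2) (ZMod ℓ)) = _
      rw [Paper.mat] at h
      rw [h]
      show wm ℓ * _ = _
      rw [wm, Kmat, Matrix.mul_fin_two]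
      ext i j; fin_cases i <;> fin_cases j <;> simp
  · rintro (h | h)
    · obtain ⟨x, y, h⟩ := range_phi_subset_Cns h
      exact Or.inl ⟨x, y, h⟩
    · obtain ⟨x, y, h⟩ := range_phi_subset_Cns h
      refine Or.inr ⟨x, -y, ?_⟩
      show (g : Matrix (Fin 2) (Fin 2) (ZMod ℓ)) = _
      have hg : (g : Matrix (Fin 2) (Fin 2) (ZMod ℓ)) = wm ℓ * ((Wu ℓ * g : GL2 ℓ) : Matrix (Fin 2) (Fin 2) (ZMod ℓ)) := by
        rw [Units.val_mul]
        show _ = wm ℓ * (wm ℓ * _)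
        rw [← mul_assoc, wm_mul_wm, one_mul]
      rw [hg, h, wm, Matrix.mul_fin_two]
      ext i j; fin_cases i <;> fin_cases j <;> simp

lemma two_lt (hℓ : Nat.Prime ℓ) (hodd : Odd ℓ) : 2 < ℓ := by
  rcases hℓ.two_le.lt_or_eq with h | h
  · exact h
  · exfalso; rw [← h] at hodd; simp [Nat.odd_iff] at hodd

lemma one_ne_neg_one (hℓ : Nat.Prime ℓ) (hodd : Odd ℓ) : (1 : ZMod ℓ) ≠ -1 := by
  haveI : Fact (2 < ℓ) := ⟨two_lt hℓ hodd⟩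
  exact fun h => ZMod.neg_one_ne_one h.symm

lemma Wu_not_mem_range (hℓ : Nat.Prime ℓ) (hodd : Odd ℓ) : Wu ℓ ∉ (phi ε).range := by
  intro h
  obtain ⟨x, y, h⟩ := range_phi_subset_Cns h
  have h00 : (1 : ZMod ℓ) = x := by
    have := congrFun (congrFun h 0) 0
    simpa [Wu, wm] using this
  have h11 : (-1 : ZMod ℓ) = x := by
    have := congrFun (congrFun h 1) 1
    simpa [Wu, wm] using this
  exact one_ne_neg_one hℓ hodd (h00.trans h11.symm)

lemma Wu_mul_Wu_mul (g : GL2 ℓ) : Wu ℓ * (Wu ℓ * g) = g := by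
  rw [← mul_assoc, Wu_mul_Wu, one_mul]

lemma glue_coe {P : Subgroup (GL2 ℓ)} {hP : ∀ p ∈ P, Wu ℓ * p * Wu ℓ ∈ P} :
    (glue P hP : Set (GL2 ℓ)) = ↑P ∪ (fun g => Wu ℓ * g) '' ↑P := by
  ext g
  constructor
  · rintro (h | h)
    · exact Or.inl h
    · exact Or.inr ⟨Wu ℓ * g, h, Wu_mul_Wu_mul g⟩
  · rintro (h | ⟨p, hp, rfl⟩)
    · exact Or.inl h
    · exact Or.inr (by rw [Wu_mul_Wu_mul]; exact hp)

lemma glue_card {P : Subgroup (GL2 ℓ)} {hP : ∀ p ∈ P, Wu ℓ * p * Wu ℓ ∈ P}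
    (hℓ : Nat.Prime ℓ) (hWP : Wu ℓ ∉ P) :
    Nat.card (glue P hP) = 2 * Nat.card P := by
  haveI : NeZero ℓ := ⟨hℓ.ne_zero⟩
  have disj : Disjoint (↑P : Set (GL2 ℓ)) ((fun g => Wu ℓ * g) '' ↑P) := by
    rw [Set.disjoint_left]
    rintro g h1 ⟨p, hp, rfl⟩
    apply hWP
    have := P.mul_mem h1 (P.inv_mem hp)
    rwa [mul_assoc, mul_inv_cancel, mul_one] at this
  have h1 : Nat.card (glue P hP) = ((glue P hP : Set (GL2 ℓ))).ncard :=
    Nat.card_coe_set_eq _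
  rw [h1, glue_coe, Set.ncard_union_eq disj (Set.toFinite _) (Set.toFinite _),
    Set.ncard_image_of_injective _ (mul_right_injective (Wu ℓ)),
    ← Nat.card_coe_set_eq, SetLike.coe_sort_coe, two_mul]

lemma card_S (hℓ : Nat.Prime ℓ) : Nat.card (S ε) = ℓ^2 := by
  haveI := Fact.mk hℓ
  haveI : NeZero ℓ := ⟨hℓ.ne_zero⟩
  have e : ZMod ℓ × ZMod ℓ ≃ S ε :=
    { toFun := fun p => ⟨Kmat ε p.1 p.2, p.1, p.2, rfl⟩
      invFun := fun s => ((s : Matrix (Fin 2) (Fin 2) (ZMod ℓ)) 0 0,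
        (s : Matrix (Fin 2) (Fin 2) (ZMod ℓ)) 1 0)
      left_inv := by rintro ⟨x, y⟩; simp [Kmat]
      right_inv := by
        rintro ⟨A, x, y, rfl⟩
        apply Subtype.ext
        show Kmat ε (Kmat ε x y 0 0) (Kmat ε x y 1 0) = Kmat ε x y
        simp [Kmat] }
  rw [← Nat.card_congr e, Nat.card_prod, Nat.card_zmod, sq]

lemma card_units_S (hℓ : Nat.Prime ℓ) (hε : ∀ t : ZMod ℓ, t ^ 2 ≠ ε) :
    Nat.card (S ε)ˣ = ℓ^2 - 1 := by
  haveI := Fact.mk hℓ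
  haveI : NeZero ℓ := ⟨hℓ.ne_zero⟩
  letI : Field (S ε) := (S_isField hℓ hε).toField
  rw [Nat.card_units, card_S hℓ]

lemma card_range_phi (hℓ : Nat.Prime ℓ) (hε : ∀ t : ZMod ℓ, t ^ 2 ≠ ε) :
    Nat.card (phi ε).range = ℓ^2 - 1 := by
  rw [← card_units_S hℓ hε]
  exact (Nat.card_congr (MonoidHom.ofInjective (phi_injective (ε := ε))).toEquiv).symm

lemma card_GL2 (hℓ : Nat.Prime ℓ) : Nat.card (GL2 ℓ) = (ℓ^2 - 1) * (ℓ^2 - ℓ) := by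
  haveI := Fact.mk hℓ
  haveI : NeZero ℓ := ⟨hℓ.ne_zero⟩
  rw [Matrix.card_GL_field]
  rw [Fin.prod_univ_two]
  simp [ZMod.card]

lemma two_ne_zero' (hℓ : Nat.Prime ℓ) (hodd : Odd ℓ) : (2 : ZMod ℓ) ≠ 0 := by
  haveI := Fact.mk hℓ
  intro h
  have h2 : ((2 : ℕ) : ZMod ℓ) = 0 := by exact_mod_cast h
  rw [ZMod.natCast_eq_zero_iff] at h2
  have := (Nat.prime_dvd_prime_iff_eq hℓ Nat.prime_two).mp h2
  rw [this] at hodd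
  simp [Nat.odd_iff] at hodd

/-- No conjugate of `Wu` lies in `CnsSet`. -/
lemma conj_Wu_not_Cns (hℓ : Nat.Prime ℓ) (hodd : Odd ℓ) (hε : ∀ t : ZMod ℓ, t ^ 2 ≠ ε)
    (a : GL2 ℓ) : a * Wu ℓ * a⁻¹ ∉ Paper.CnsSet ℓ ε := by
  haveI := Fact.mk hℓ
  rintro ⟨x, y, hxy⟩
  have hval : Paper.mat (a * Wu ℓ * a⁻¹) =
      (a : Matrix (Fin 2) (Fin 2) (ZMod ℓ)) * (Wu ℓ : Matrix (Fin 2) (Fin 2) (ZMod ℓ)) *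
        ((a⁻¹ : GL2 ℓ) : Matrix (Fin 2) (Fin 2) (ZMod ℓ)) := by
    rw [Paper.mat, Units.val_mul, Units.val_mul]
  have htr : Matrix.trace (Paper.mat (a * Wu ℓ * a⁻¹)) = 0 := by
    rw [hval]
    rw [Matrix.trace_units_conj]
    show Matrix.trace (wm ℓ) = 0
    rw [Matrix.trace_fin_two]
    simp [wm]
  have hdet : Matrix.det (Paper.mat (a * Wu ℓ * a⁻¹)) = -1 := by
    rw [hval, Matrix.det_units_conj]
    show Matrix.det (wm ℓ) = -1
    rw [wm, Matrix.det_fin_two_of]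
    ring
  rw [hxy, Matrix.trace_fin_two_of] at htr
  rw [hxy, Matrix.det_fin_two_of] at hdet
  have hx : x = 0 := by
    have h2 : (2 : ZMod ℓ) * x = 0 := by linear_combination htr
    rcases mul_eq_zero.mp h2 with h | h
    · exact absurd h (two_ne_zero' hℓ hodd)
    · exact h
  rw [hx] at hdet
  have hyy : ε * (y * y) = 1 := by linear_combination -hdet
  have hy : y ≠ 0 := by
    intro h
    rw [h] at hyy
    simp at hyy
  apply hε y⁻¹
  have hinv : y * y⁻¹ = 1 := mul_inv_cancel₀ hy
  calc (y⁻¹)^2 = (y⁻¹)^2 * (ε * (y*y)) := by rw [hyy, mul_one]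
    _ = ε * (y*y⁻¹) * (y*y⁻¹) := by ring
    _ = ε := by rw [hinv]; ring

lemma anti_sq (t : GL2 ℓ) (x y : ZMod ℓ)
    (h : Paper.mat t = !![x, -(ε*y); y, -x]) :
    Paper.mat (t * t) = !![x*x - ε*(y*y), 0; 0, x*x - ε*(y*y)] := by
  have : Paper.mat (t * t) = Paper.mat t * Paper.mat t := Units.val_mul t t
  rw [this, h, Matrix.mul_fin_two]
  congr 1 <;> ring

lemma anti_odd_pow (t : GL2 ℓ) (x y : ZMod ℓ)
    (h : Paper.mat t = !![x, -(ε*y); y, -x]) (k : ℕ) :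
    Paper.mat (t ^ (2*k+1)) =
      !![(x*x - ε*(y*y))^k * x, -(ε*((x*x - ε*(y*y))^k * y));
         (x*x - ε*(y*y))^k * y, -((x*x - ε*(y*y))^k * x)] := by
  induction k with
  | zero =>
    rw [pow_one, h]
    congr 1 <;> ring
  | succ k ih =>
    have hp : t ^ (2*(k+1)+1) = t ^ (2*k+1) * (t * t) := by
      rw [← pow_two, ← pow_add]
      ring_nf
    rw [hp]
    have : Paper.mat (t ^ (2*k+1) * (t*t)) = Paper.mat (t ^ (2*k+1)) * Paper.mat (t*t) :=
      Units.val_mul _ _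
    rw [this, ih, anti_sq t x y h, Matrix.mul_fin_two]
    congr 1 <;> ring

lemma anti_even_order (hℓ : Nat.Prime ℓ) (hodd : Odd ℓ) (t : GL2 ℓ) (x y : ZMod ℓ)
    (h : Paper.mat t = !![x, -(ε*y); y, -x]) : 2 ∣ orderOf t := by
  haveI := Fact.mk hℓ
  haveI : NeZero ℓ := ⟨hℓ.ne_zero⟩
  by_contra hdvd
  have hodd' : Odd (orderOf t) := Nat.odd_iff.mpr (Nat.two_dvd_ne_zero.mp hdvd)
  obtain ⟨k, hk⟩ := hodd'
  have h1 : t ^ (2*k+1) = 1 := by rw [← hk]; exact pow_orderOf_eq_one t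
  have h2 := anti_odd_pow t x y h k
  rw [h1] at h2
  have e00 : (1 : Matrix (Fin 2) (Fin 2) (ZMod ℓ)) 0 0 = (x*x - ε*(y*y))^k * x := by
    have := congrFun (congrFun h2 0) 0
    simpa [Paper.mat] using this
  have e11 : (1 : Matrix (Fin 2) (Fin 2) (ZMod ℓ)) 1 1 = -((x*x - ε*(y*y))^k * x) := by
    have := congrFun (congrFun h2 1) 1
    simpa [Paper.mat] using this
  apply one_ne_neg_one hℓ hodd
  simp only [Matrix.one_apply_eq] at e00 e11
  calc (1 : ZMod ℓ) = -((x*x - ε*(y*y))^k * x) := e11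
    _ = -1 := by rw [← e00]


lemma mem_NnsSub_of_glue {P : Subgroup (GL2 ℓ)} {hP : ∀ p ∈ P, Wu ℓ * p * Wu ℓ ∈ P}
    (hPle : P ≤ (phi ε).range) {g : GL2 ℓ} (hg : g ∈ glue P hP) : g ∈ NnsSub ε := by
  rcases hg with h | h
  · exact Or.inl (hPle h)
  · exact Or.inr (hPle h)

lemma exists_belongs (hℓ : Nat.Prime ℓ) (hodd : Odd ℓ) (hε : ∀ t : ZMod ℓ, t ^ 2 ≠ ε)
    {m : ℕ} (hm : m ∣ ℓ^2 - 1) :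
    ∃ G : Subgroup (GL2 ℓ), Paper.BelongsNns ε G ∧ Nat.card G = 2 * m := by
  haveI := Fact.mk hℓ
  haveI : NeZero ℓ := ⟨hℓ.ne_zero⟩
  letI : Field (S ε) := (S_isField hℓ hε).toField
  letI : Fintype (S ε)ˣ := Fintype.ofFinite _
  obtain ⟨ζ, hζ⟩ := IsCyclic.exists_generator (α := (S ε)ˣ)
  have hN0 : ℓ^2 - 1 ≠ 0 := by
    have := hℓ.two_le
    have : 4 ≤ ℓ^2 := by nlinarith
    omega
  have hNζ : orderOf ζ = ℓ^2 - 1 := by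
    rw [orderOf_eq_card_of_forall_mem_zpowers hζ]
    exact card_units_S hℓ hε
  set q := (ℓ^2 - 1) / m with hq
  have hqd : q ∣ ℓ^2 - 1 := Nat.div_dvd_of_dvd hm
  set g := ζ ^ q with hgdef
  have hog : orderOf g = m := by
    rw [hgdef, orderOf_pow, hNζ, Nat.gcd_eq_right hqd, hq, Nat.div_div_self hm hN0]
  have hgm : g ^ m = 1 := by rw [← hog]; exact pow_orderOf_eq_one g
  have hzle : ∀ u ∈ Subgroup.zpowers g, u ^ m = 1 := by
    intro u hu
    obtain ⟨j, rfl⟩ := Subgroup.mem_zpowers_iff.mp hu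
    rw [← zpow_natCast, ← _root_.zpow_mul, mul_comm, _root_.zpow_mul, zpow_natCast, hgm, _root_.one_zpow]
  have rootcap : ∀ v : (S ε)ˣ, v ^ m = 1 → v ∈ Subgroup.zpowers g := by
    intro v hv
    obtain ⟨j, rfl⟩ := Subgroup.mem_zpowers_iff.mp (hζ v)
    have h1 : ζ ^ (j * m) = 1 := by
      rw [_root_.zpow_mul, zpow_natCast, hv]
    have h2 : ((ℓ^2 - 1 : ℕ) : ℤ) ∣ j * m := by
      have := orderOf_dvd_iff_zpow_eq_one.mpr h1
      rwa [hNζ] at this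
    have h3 : (ℓ^2 - 1 : ℕ) = q * m := by
      rw [hq, Nat.div_mul_cancel hm]
    have hm0 : m ≠ 0 := by rintro rfl; exact hN0 (zero_dvd_iff.mp hm)
    have h4 : (q : ℤ) ∣ j := by
      have : (q : ℤ) * m ∣ j * m := by rw [← Nat.cast_mul, ← h3]; exact h2
      exact (mul_dvd_mul_iff_right (by exact_mod_cast hm0 : (m : ℤ) ≠ 0)).mp this
    obtain ⟨i, rfl⟩ := h4
    refine Subgroup.mem_zpowers_iff.mpr ⟨i, ?_⟩
    rw [hgdef, ← zpow_natCast, ← _root_.zpow_mul]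
  set P := (Subgroup.zpowers g).map (phi ε) with hPdef
  have hPle : P ≤ (phi ε).range := by
    rintro _ ⟨u, hu, rfl⟩
    exact ⟨u, rfl⟩
  have hP : ∀ p ∈ P, Wu ℓ * p * Wu ℓ ∈ P := by
    rintro _ ⟨u, hu, rfl⟩
    obtain ⟨v, hv, hpow⟩ := conj_phi u
    rw [hv]
    exact ⟨v, rootcap v (hpow m (hzle u hu)), rfl⟩
  refine ⟨glue P hP, ⟨⟨1, fun x hx => ?_⟩, ?_⟩, ?_⟩
  · have : (1 : GL2 ℓ) * x * 1⁻¹ = x := by simp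
    rw [this, NnsSet_eq_NnsSub hℓ hε]
    exact mem_NnsSub_of_glue hPle hx
  · rintro ⟨a, ha⟩
    exact conj_Wu_not_Cns hℓ hodd hε a (ha (Wu ℓ) Wu_mem_glue)
  · rw [glue_card hℓ (fun h => Wu_not_mem_range hℓ hodd (hPle h))]
    congr 1
    rw [hPdef, ← Nat.card_congr (Subgroup.equivMapOfInjective _ _ (phi_injective)).toEquiv,
      Nat.card_zpowers, hog]

lemma NnsSub_card (hℓ : Nat.Prime ℓ) (hodd : Odd ℓ) (hε : ∀ t : ZMod ℓ, t ^ 2 ≠ ε) :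
    Nat.card (NnsSub ε) = 2 * (ℓ^2 - 1) := by
  unfold NnsSub
  rw [glue_card hℓ (Wu_not_mem_range hℓ hodd), card_range_phi hℓ hε]

end NnsProof

open NnsProof in
theorem statement_8 (ℓ : ℕ) (hℓ : Nat.Prime ℓ) (hodd : Odd ℓ) (ε : ZMod ℓ)
    (hε : ∀ t : ZMod ℓ, t ^ 2 ≠ ε) :
    { n : ℕ | ∃ G : Subgroup (GL2 ℓ), Paper.BelongsNns ε G ∧ G.index = n } =
      { n : ℕ | 0 < n ∧ ℓ * (ℓ - 1) / 2 ∣ n ∧ n ∣ ℓ * (ℓ + 1) * (ℓ - 1) ^ 2 / 2 } := by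
  haveI := Fact.mk hℓ
  haveI : NeZero ℓ := ⟨hℓ.ne_zero⟩
  obtain ⟨s, hs⟩ := hodd
  have hl3 : 2 < ℓ := two_lt hℓ ⟨s, hs⟩
  have hs1 : 1 ≤ s := by omega
  have hsub1 : ℓ - 1 = 2*s := by omega
  have hsq1 : ℓ^2 - 1 = 2*s*(2*s+2) := Nat.sub_eq_of_eq_add (by rw [hs]; ring)
  have hsq2 : ℓ^2 - ℓ = (2*s+1)*(2*s) := Nat.sub_eq_of_eq_add (by rw [hs]; ring)
  have hT : ℓ*(ℓ-1)/2 = (2*s+1)*s := by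
    rw [hsub1, hs]
    rw [show (2*s+1)*(2*s) = 2*((2*s+1)*s) by ring, Nat.mul_div_cancel_left _ two_pos]
  have hH : ℓ*(ℓ+1)*(ℓ-1)^2/2 = (2*s+1)*(s+1)*(2*s)^2 := by
    rw [hsub1, hs]
    rw [show (2*s+1)*((2*s+1)+1)*(2*s)^2 = 2*((2*s+1)*(s+1)*(2*s)^2) by ring,
      Nat.mul_div_cancel_left _ two_pos]
  have hGL : Nat.card (GL2 ℓ) = 2*((2*s+1)*(s+1)*(2*s)^2) := by
    rw [card_GL2 hℓ, hsq1, hsq2]; ring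
  have hNnsIdx : (NnsSub ε).index = (2*s+1)*s := by
    have hmc := Subgroup.index_mul_card (NnsSub ε)
    rw [NnsSub_card hℓ ⟨s, hs⟩ hε, hGL, hsq1] at hmc
    have hpos : 0 < 2*(2*s*(2*s+2)) := by positivity
    apply Nat.eq_of_mul_eq_mul_right hpos
    rw [hmc]; ring
  ext n
  simp only [Set.mem_setOf_eq]
  constructor
  · rintro ⟨G, ⟨⟨a, hconj⟩, hnotCns⟩, rfl⟩
    set f := ((MulAut.conj a).toMonoidHom : GL2 ℓ →* GL2 ℓ) with hfdef
    have hf : ∀ g : GL2 ℓ, f g = a * g * a⁻¹ := fun g => rfl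
    set G' := G.map f with hG'def
    have hidx : G'.index = G.index := by
      rw [hG'def, Subgroup.index_map_of_injective _ (MulAut.conj a).injective,
        MonoidHom.range_eq_top_of_surjective _ (MulAut.conj a).surjective,
        Subgroup.index_top, mul_one]
    have hle : G' ≤ NnsSub ε := by
      rintro _ ⟨g, hg, rfl⟩
      rw [hf]
      rw [← SetLike.mem_coe, ← NnsSet_eq_NnsSub hℓ hε]
      exact hconj g hg
    refine ⟨Nat.pos_of_ne_zero Subgroup.index_ne_zero_of_finite, ?_, ?_⟩
    · rw [hT, ← hNnsIdx, ← hidx]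
      exact Subgroup.index_dvd_of_le hle
    · -- n ∣ half the group order, since G' has even cardinality
      rw [Paper.ConjSub] at hnotCns
      push_neg at hnotCns
      obtain ⟨g₀, hg₀, hnmem⟩ := hnotCns a
      have ht' : a * g₀ * a⁻¹ ∈ G' := ⟨g₀, hg₀, (hf g₀).symm⟩
      have hanti : ∃ x y : ZMod ℓ, Paper.mat (a*g₀*a⁻¹) = !![x, -(ε*y); y, -x] :=
        (hconj g₀ hg₀).resolve_left hnmem
      obtain ⟨x, y, hxy⟩ := hanti
      have heven : 2 ∣ orderOf (a*g₀*a⁻¹) := anti_even_order hℓ ⟨s, hs⟩ _ x y hxy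
      have hdvd2 : 2 ∣ Nat.card G' :=
        dvd_trans heven (Subgroup.orderOf_dvd_natCard G' ht')
      obtain ⟨c, hc⟩ := hdvd2
      have hmc := Subgroup.card_mul_index G'
      rw [hc, hidx, hGL] at hmc
      have : c * G.index = (2*s+1)*(s+1)*(2*s)^2 := by
        have h2 : 2*(c * G.index) = 2*((2*s+1)*(s+1)*(2*s)^2) := by
          rw [← hmc]; ring
        omega
      rw [hH]
      exact Dvd.intro_left c this
  · rintro ⟨hpos, hd1, hd2⟩
    rw [hT] at hd1
    rw [hH] at hd2
    set Hval := (2*s+1)*(s+1)*(2*s)^2 with hHval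
    set m := Hval / n with hmdef
    have hnm : n * m = Hval := Nat.mul_div_cancel' hd2
    obtain ⟨k, hk⟩ := hd1
    have hTE : Hval = ((2*s+1)*s) * (2*s*(2*s+2)) := by rw [hHval]; ring
    have hkm : k * m = 2*s*(2*s+2) := by
      have h2 : ((2*s+1)*s) * (k * m) = ((2*s+1)*s) * (2*s*(2*s+2)) := by
        rw [← hTE, ← hnm, hk]; ring
      exact Nat.eq_of_mul_eq_mul_left (by positivity) h2
    have hmdvd : m ∣ ℓ^2 - 1 := by
      rw [hsq1]
      exact Dvd.intro_left k hkm
    have hm0 : 0 < m := by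
      rcases Nat.eq_zero_or_pos m with h | h
      · exfalso
        rw [h, mul_zero] at hkm
        have : 0 < 2*s*(2*s+2) := by positivity
        omega
      · exact h
    obtain ⟨G, hb, hcard⟩ := exists_belongs hℓ ⟨s, hs⟩ hε hmdvd
    refine ⟨G, hb, ?_⟩
    have hmc := Subgroup.index_mul_card G
    rw [hcard, hGL] at hmc
    have h2 : G.index * (2*m) = n * (2*m) := by
      rw [hmc, show n*(2*m) = 2*(n*m) by ring, hnm, hHval]
    exact Nat.eq_of_mul_eq_mul_right (by positivity) h2
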